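/- For every δ ∈ (0,1) and every ξ ∈ Δ(K) it holds that |v_δ(ξ) − v_δ(ξM)| ≤ (1−δ)·‖u‖∞ / δ. -/

import Mathlib

open scoped BigOperators

noncomputable section

/-- A row-stochastic matrix: nonnegative entries, rows summing to 1. -/
def IsStochastic {K : Type*} [Fintype K] (M : Matrix K K ℝ) : Prop :=
  (∀ i j, 0 ≤ M i j) ∧ ∀ i, ∑ j, M i j = 1

/-- A split of `ξ`: a countable family of weights `α` and beliefs `ξs` with
`α s ≥ 0`, `ξs s ∈ Δ(K)`, `∑ α = 1` and `∑ α_s ξ_s = ξ`. -/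
def IsSplit {K : Type*} [Fintype K] (ξ : K → ℝ) (α : ℕ → ℝ) (ξs : ℕ → K → ℝ) : Prop :=
  (∀ s, 0 ≤ α s) ∧ (∀ s, ξs s ∈ stdSimplex ℝ K) ∧ (∑' s, α s) = 1 ∧
    ∀ ℓ : K, (∑' s, α s * ξs s ℓ) = ξ ℓ

/-- The one-stage payoff of a split in the δ-discounted Bellman equation. -/
def splitPayoff {K : Type*} [Fintype K] (M : Matrix K K ℝ) (u : (K → ℝ) → ℝ) (δ : ℝ)
    (w : (K → ℝ) → ℝ) (α : ℕ → ℝ) (ξs : ℕ → K → ℝ) : ℝ :=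
  ∑' s, α s * ((1 - δ) * u (ξs s) + δ * w (Matrix.vecMul (ξs s) M))

/-- `v` is the family of δ-discounted values of the Markovian persuasion game:
for each `δ ∈ [0,1)`, `v δ` is bounded between `0` and `C = ‖u‖∞` on `Δ(K)` and
satisfies the Bellman equation there. -/
def IsValueFamily {K : Type*} [Fintype K] (M : Matrix K K ℝ) (u : (K → ℝ) → ℝ) (C : ℝ)
    (v : ℝ → (K → ℝ) → ℝ) : Prop :=
  ∀ δ ∈ Set.Ico (0 : ℝ) 1,
    (∀ ξ ∈ stdSimplex ℝ K, 0 ≤ v δ ξ ∧ v δ ξ ≤ C) ∧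
    ∀ ξ ∈ stdSimplex ℝ K,
      v δ ξ = sSup { r : ℝ | ∃ α ξs, IsSplit ξ α ξs ∧ r = splitPayoff M u δ (v δ) α ξs }

section Aux

variable {K : Type*} [Fintype K]

lemma aux_summable_weights {ξ : K → ℝ} {α : ℕ → ℝ} {ξs : ℕ → K → ℝ}
    (h : IsSplit ξ α ξs) : Summable α := by
  by_contra hs
  have h0 := tsum_eq_zero_of_not_summable hs
  rw [h.2.2.1] at h0
  norm_num at h0

lemma aux_simplex_le_one {x : K → ℝ} (hx : x ∈ stdSimplex ℝ K) (ℓ : K) : x ℓ ≤ 1 := by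
  have := Finset.single_le_sum (f := x) (fun i _ => hx.1 i) (Finset.mem_univ ℓ)
  rw [hx.2] at this
  exact this

lemma aux_vecMul_mem {M : Matrix K K ℝ} (hM : IsStochastic M)
    {ξ : K → ℝ} (hξ : ξ ∈ stdSimplex ℝ K) : Matrix.vecMul ξ M ∈ stdSimplex ℝ K := by
  constructor
  · intro j
    simp only [Matrix.vecMul, dotProduct]
    exact Finset.sum_nonneg fun i _ => mul_nonneg (hξ.1 i) (hM.1 i j)
  · simp only [Matrix.vecMul, dotProduct]
    rw [Finset.sum_comm]
    have h1 : ∀ i, ∑ j, ξ i * M i j = ξ i := by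
      intro i
      rw [← Finset.mul_sum, hM.2 i, mul_one]
    simp only [h1]
    exact hξ.2

lemma aux_summable_mul {w g : ℕ → ℝ} {B : ℝ} (hw : Summable w) (hw0 : ∀ s, 0 ≤ w s)
    (hg0 : ∀ s, 0 ≤ g s) (hgB : ∀ s, g s ≤ B) : Summable (fun s => w s * g s) :=
  Summable.of_nonneg_of_le (fun s => mul_nonneg (hw0 s) (hg0 s))
    (fun s => mul_le_mul_of_nonneg_left (hgB s) (hw0 s)) (hw.mul_right B)

end Aux

theorem markovian_persuasion_one_step_shift_bound
    {K : Type*} [Fintype K] [Nonempty K]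
    (M : Matrix K K ℝ) (hM : IsStochastic M)
    (u : (K → ℝ) → ℝ) (hu0 : ∀ ξ ∈ stdSimplex ℝ K, 0 ≤ u ξ)
    (husc : UpperSemicontinuousOn u (stdSimplex ℝ K))
    (C : ℝ) (hC : IsLUB (u '' stdSimplex ℝ K) C)
    (v : ℝ → (K → ℝ) → ℝ) (hv : IsValueFamily M u C v) :
    ∀ δ : ℝ, 0 < δ → δ < 1 →
      ∀ ξ ∈ stdSimplex ℝ K,
        |v δ ξ - v δ (Matrix.vecMul ξ M)| ≤ (1 - δ) * C / δ := by
  classical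
  intro δ hδ0 hδ1 ξ hξ
  obtain ⟨hbd, hbell⟩ := hv δ ⟨hδ0.le, hδ1⟩
  set F : (K → ℝ) → ℝ :=
    fun x => (1 - δ) * u x + δ * v δ (Matrix.vecMul x M) with hF
  have hpay : ∀ (α : ℕ → ℝ) (ξs : ℕ → K → ℝ),
      splitPayoff M u δ (v δ) α ξs = ∑' s, α s * F (ξs s) := fun _ _ => rfl
  have hCub : ∀ x ∈ stdSimplex ℝ K, u x ≤ C := fun x hx => hC.1 ⟨x, hx, rfl⟩
  obtain ⟨k0⟩ := ‹Nonempty K›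
  have hx0 : (fun i => if i = k0 then (1:ℝ) else 0) ∈ stdSimplex ℝ K :=
    ⟨fun i => by by_cases h : i = k0 <;> simp [h], by simp⟩
  have hC0 : 0 ≤ C := le_trans (hu0 _ hx0) (hCub _ hx0)
  have hF0 : ∀ x ∈ stdSimplex ℝ K, 0 ≤ F x := by
    intro x hx
    have h1 := hu0 x hx
    have h2 := (hbd _ (aux_vecMul_mem hM hx)).1
    have h3 : (0:ℝ) ≤ 1 - δ := by linarith
    simp only [hF]
    nlinarith
  have hFC : ∀ x ∈ stdSimplex ℝ K, F x ≤ C := by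
    intro x hx
    have h1 := hCub x hx
    have h2 := (hbd _ (aux_vecMul_mem hM hx)).2
    simp only [hF]
    nlinarith [hu0 x hx, (hbd _ (aux_vecMul_mem hM hx)).1]
  have hple : ∀ (α : ℕ → ℝ) (ξs : ℕ → K → ℝ) (η : K → ℝ), IsSplit η α ξs →
      (∑' s, α s * F (ξs s)) ≤ C := by
    intro α ξs η hsp
    have hαs : Summable α := aux_summable_weights hsp
    obtain ⟨hα0, hmem, hα1, -⟩ := hsp
    calc (∑' s, α s * F (ξs s)) ≤ ∑' s, α s * C := by
          refine Summable.tsum_le_tsum ?_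
            (aux_summable_mul hαs hα0 (fun s => hF0 _ (hmem s)) (fun s => hFC _ (hmem s)))
            (hαs.mul_right C)
          exact fun s => mul_le_mul_of_nonneg_left (hFC _ (hmem s)) (hα0 s)
      _ = C := by rw [tsum_mul_right, hα1, one_mul]
  have htriv : ∀ η ∈ stdSimplex ℝ K,
      F η ∈ {r : ℝ | ∃ α ξs, IsSplit η α ξs ∧ r = splitPayoff M u δ (v δ) α ξs} := by
    intro η hη
    refine ⟨fun s => if s = 0 then 1 else 0, fun _ => η,
      ⟨fun s => by positivity, fun _ => hη, tsum_ite_eq 0 1, ?_⟩, ?_⟩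
    · intro ℓ
      simp only [ite_mul, one_mul, zero_mul]
      exact tsum_ite_eq 0 (fun _ => η ℓ)
    · rw [hpay]
      simp only [ite_mul, one_mul, zero_mul]
      exact (tsum_ite_eq 0 (fun _ => F η)).symm
  have hne : ∀ η ∈ stdSimplex ℝ K,
      {r : ℝ | ∃ α ξs, IsSplit η α ξs ∧ r = splitPayoff M u δ (v δ) α ξs}.Nonempty :=
    fun η hη => ⟨F η, htriv η hη⟩
  have hbdd : ∀ η : K → ℝ,
      BddAbove {r : ℝ | ∃ α ξs, IsSplit η α ξs ∧ r = splitPayoff M u δ (v δ) α ξs} := by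
    intro η
    refine ⟨C, ?_⟩
    rintro r ⟨α, ξs, hsp, rfl⟩
    rw [hpay]
    exact hple α ξs η hsp
  -- concavity / superadditivity of v δ over splits
  have hconc : ∀ η ∈ stdSimplex ℝ K, ∀ β ηs, IsSplit η β ηs →
      (∑' s, β s * v δ (ηs s)) ≤ v δ η := by
    intro η hη β ηs hsp
    have hβs : Summable β := aux_summable_weights hsp
    obtain ⟨hβ0, hmem, hβ1, hsum⟩ := hsp
    refine le_of_forall_pos_le_add ?_
    intro ε hε
    have hchoice : ∀ s : ℕ, ∃ γ ζ, IsSplit (ηs s) γ ζ ∧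
        v δ (ηs s) - ε < splitPayoff M u δ (v δ) γ ζ := by
      intro s
      have hlt : v δ (ηs s) - ε < sSup {r : ℝ | ∃ α ξs, IsSplit (ηs s) α ξs ∧
          r = splitPayoff M u δ (v δ) α ξs} := by
        rw [← hbell _ (hmem s)]; linarith
      obtain ⟨r, hr, hlt'⟩ := exists_lt_of_lt_csSup (hne _ (hmem s)) hlt
      obtain ⟨γ, ζ, hsp', rfl⟩ := hr
      exact ⟨γ, ζ, hsp', hlt'⟩
    choose γ ζ hζsp hζlt using hchoice
    have hγ0 : ∀ s t, 0 ≤ γ s t := fun s => (hζsp s).1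
    have hζmem : ∀ s t, ζ s t ∈ stdSimplex ℝ K := fun s => (hζsp s).2.1
    have hγ1 : ∀ s, (∑' t, γ s t) = 1 := fun s => (hζsp s).2.2.1
    have hγs : ∀ s, Summable (γ s) := fun s => aux_summable_weights (hζsp s)
    set e : ℕ ≃ ℕ × ℕ := (Denumerable.eqv (ℕ × ℕ)).symm with he
    set A : ℕ → ℝ := fun n => β (e n).1 * γ (e n).1 (e n).2 with hA
    set Z : ℕ → K → ℝ := fun n => ζ (e n).1 (e n).2 with hZ
    have hbase : Summable (fun p : ℕ × ℕ => β p.1 * γ p.1 p.2) := by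
      rw [summable_prod_of_nonneg (fun p => mul_nonneg (hβ0 p.1) (hγ0 p.1 p.2))]
      refine ⟨fun s => (hγs s).mul_left (β s), ?_⟩
      refine hβs.congr ?_
      intro s
      show β s = ∑' t, β s * γ s t
      rw [tsum_mul_left, hγ1 s, mul_one]
    have hfub : ∀ (g : (K → ℝ) → ℝ) (B : ℝ), (∀ x ∈ stdSimplex ℝ K, 0 ≤ g x) →
        (∀ x ∈ stdSimplex ℝ K, g x ≤ B) →
        (∑' n, A n * g (Z n)) = ∑' s, β s * ∑' t, γ s t * g (ζ s t) := by
      intro g B hg0 hgB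
      have hfsum : Summable (fun p : ℕ × ℕ => β p.1 * γ p.1 p.2 * g (ζ p.1 p.2)) :=
        Summable.of_nonneg_of_le
          (fun p => mul_nonneg (mul_nonneg (hβ0 p.1) (hγ0 p.1 p.2)) (hg0 _ (hζmem p.1 p.2)))
          (fun p => mul_le_mul_of_nonneg_left (hgB _ (hζmem p.1 p.2))
            (mul_nonneg (hβ0 p.1) (hγ0 p.1 p.2)))
          (hbase.mul_right B)
      have hslice : ∀ s, Summable (fun t => β s * γ s t * g (ζ s t)) := fun s =>
        Summable.of_nonneg_of_le
          (fun t => mul_nonneg (mul_nonneg (hβ0 s) (hγ0 s t)) (hg0 _ (hζmem s t)))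
          (fun t => mul_le_mul_of_nonneg_left (hgB _ (hζmem s t))
            (mul_nonneg (hβ0 s) (hγ0 s t)))
          (((hγs s).mul_left (β s)).mul_right B)
      have hstep1 : (∑' n, A n * g (Z n))
          = ∑' p : ℕ × ℕ, β p.1 * γ p.1 p.2 * g (ζ p.1 p.2) :=
        Equiv.tsum_eq e (fun p : ℕ × ℕ => β p.1 * γ p.1 p.2 * g (ζ p.1 p.2))
      rw [hstep1, Summable.tsum_prod' hfsum (fun s => (hslice s).congr fun t => rfl)]
      refine tsum_congr fun s => ?_
      simp only [mul_assoc]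
      rw [tsum_mul_left]
    have hAsplit : IsSplit η A Z := by
      refine ⟨fun n => mul_nonneg (hβ0 _) (hγ0 _ _), fun n => hζmem _ _, ?_, ?_⟩
      · have h1 := hfub (fun _ => 1) 1 (fun _ _ => zero_le_one) (fun _ _ => le_refl 1)
        simp only [mul_one] at h1
        rw [h1]
        have h2 : ∀ s, β s * (∑' t, γ s t) = β s := fun s => by rw [hγ1 s, mul_one]
        rw [tsum_congr h2]
        exact hβ1
      · intro ℓ
        have h1 := hfub (fun x => x ℓ) 1 (fun x hx => hx.1 ℓ)
          (fun x hx => aux_simplex_le_one hx ℓ)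
        rw [h1]
        have h2 : ∀ s, β s * (∑' t, γ s t * ζ s t ℓ) = β s * ηs s ℓ := fun s => by
          rw [(hζsp s).2.2.2 ℓ]
        rw [tsum_congr h2]
        exact hsum ℓ
    have hpc : splitPayoff M u δ (v δ) A Z
        = ∑' s, β s * splitPayoff M u δ (v δ) (γ s) (ζ s) := by
      rw [hpay]
      exact hfub F C hF0 hFC
    have hvle : splitPayoff M u δ (v δ) A Z ≤ v δ η := by
      rw [hbell η hη]
      exact le_csSup (hbdd η) ⟨A, Z, hAsplit, rfl⟩
    have hps0 : ∀ s, 0 ≤ splitPayoff M u δ (v δ) (γ s) (ζ s) := fun s =>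
      tsum_nonneg (fun t => mul_nonneg (hγ0 s t) (hF0 _ (hζmem s t)))
    have hpsC : ∀ s, splitPayoff M u δ (v δ) (γ s) (ζ s) ≤ C := fun s => by
      rw [hpay]; exact hple _ _ _ (hζsp s)
    calc (∑' s, β s * v δ (ηs s))
        ≤ ∑' s, β s * (splitPayoff M u δ (v δ) (γ s) (ζ s) + ε) := by
          refine Summable.tsum_le_tsum ?_
            (aux_summable_mul hβs hβ0 (fun s => (hbd _ (hmem s)).1) (fun s => (hbd _ (hmem s)).2))
            (aux_summable_mul (B := C + ε) hβs hβ0 (fun s => by linarith [hps0 s])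
              (fun s => by linarith [hpsC s]))
          intro s
          exact mul_le_mul_of_nonneg_left (by linarith [hζlt s]) (hβ0 s)
      _ = (∑' s, β s * splitPayoff M u δ (v δ) (γ s) (ζ s)) + ε := by
          simp only [mul_add]
          rw [Summable.tsum_add (aux_summable_mul hβs hβ0 hps0 hpsC) (hβs.mul_right ε),
            tsum_mul_right, hβ1, one_mul]
      _ ≤ v δ η + ε := by rw [← hpc]; linarith [hvle]
  -- main argument
  have hMmem : Matrix.vecMul ξ M ∈ stdSimplex ℝ K := aux_vecMul_mem hM hξ
  have hup : v δ ξ ≤ (1 - δ) * C + δ * v δ (Matrix.vecMul ξ M) := by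
    rw [hbell ξ hξ]
    refine csSup_le (hne ξ hξ) ?_
    rintro r ⟨α, ξs, hsp, rfl⟩
    have hαs : Summable α := aux_summable_weights hsp
    obtain ⟨hα0, hmem, hα1, hsum⟩ := hsp
    have hMsplit : IsSplit (Matrix.vecMul ξ M) α (fun s => Matrix.vecMul (ξs s) M) := by
      refine ⟨hα0, fun s => aux_vecMul_mem hM (hmem s), hα1, ?_⟩
      intro ℓ
      have hterm : ∀ s, α s * Matrix.vecMul (ξs s) M ℓ = ∑ i, α s * (ξs s i * M i ℓ) := by
        intro s
        simp only [Matrix.vecMul, dotProduct]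
        rw [Finset.mul_sum]
      have hsum_i : ∀ i : K, Summable (fun s => α s * (ξs s i * M i ℓ)) := fun i =>
        aux_summable_mul hαs hα0 (fun s => mul_nonneg ((hmem s).1 i) (hM.1 i ℓ))
          (fun s => mul_le_mul_of_nonneg_right (aux_simplex_le_one (hmem s) i) (hM.1 i ℓ))
      rw [tsum_congr hterm, Summable.tsum_finsetSum (fun i _ => hsum_i i)]
      have h3 : ∀ i : K, (∑' s, α s * (ξs s i * M i ℓ)) = ξ i * M i ℓ := by
        intro i
        simp only [← mul_assoc]
        rw [tsum_mul_right, hsum i]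
      rw [Finset.sum_congr rfl (fun i _ => h3 i)]
      simp [Matrix.vecMul, dotProduct]
    have hW : (∑' s, α s * v δ (Matrix.vecMul (ξs s) M)) ≤ v δ (Matrix.vecMul ξ M) :=
      hconc _ hMmem α _ hMsplit
    have hW0 : 0 ≤ (∑' s, α s * v δ (Matrix.vecMul (ξs s) M)) :=
      tsum_nonneg fun s => mul_nonneg (hα0 s) (hbd _ (aux_vecMul_mem hM (hmem s))).1
    have hU : (∑' s, α s * u (ξs s)) ≤ C := by
      calc (∑' s, α s * u (ξs s)) ≤ ∑' s, α s * C := by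
            refine Summable.tsum_le_tsum
              (fun s => mul_le_mul_of_nonneg_left (hCub _ (hmem s)) (hα0 s))
              (aux_summable_mul hαs hα0 (fun s => hu0 _ (hmem s)) (fun s => hCub _ (hmem s)))
              (hαs.mul_right C)
        _ = C := by rw [tsum_mul_right, hα1, one_mul]
    have hsplit_eq : splitPayoff M u δ (v δ) α ξs
        = (1 - δ) * (∑' s, α s * u (ξs s))
          + δ * (∑' s, α s * v δ (Matrix.vecMul (ξs s) M)) := by
      have h4 : ∀ s, α s * ((1 - δ) * u (ξs s) + δ * v δ (Matrix.vecMul (ξs s) M))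
          = (1 - δ) * (α s * u (ξs s)) + δ * (α s * v δ (Matrix.vecMul (ξs s) M)) :=
        fun s => by ring
      have hsa : Summable (fun s => (1 - δ) * (α s * u (ξs s))) :=
        (aux_summable_mul hαs hα0 (fun s => hu0 _ (hmem s)) (fun s => hCub _ (hmem s))).mul_left _
      have hsb : Summable (fun s => δ * (α s * v δ (Matrix.vecMul (ξs s) M))) :=
        (aux_summable_mul hαs hα0 (fun s => (hbd _ (aux_vecMul_mem hM (hmem s))).1)
          (fun s => (hbd _ (aux_vecMul_mem hM (hmem s))).2)).mul_left _
      rw [splitPayoff, tsum_congr h4, Summable.tsum_add hsa hsb, tsum_mul_left, tsum_mul_left]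
    rw [hsplit_eq]
    have h5 : (0:ℝ) ≤ 1 - δ := by linarith
    nlinarith [mul_le_mul_of_nonneg_left hU h5, mul_le_mul_of_nonneg_left hW hδ0.le]
  have hlow : (1 - δ) * u ξ + δ * v δ (Matrix.vecMul ξ M) ≤ v δ ξ := by
    have := le_csSup (hbdd ξ) (htriv ξ hξ)
    rw [← hbell ξ hξ] at this
    exact this
  have hv1 := (hbd _ hMmem).1
  have hv2 := (hbd _ hMmem).2
  have huξ := hu0 ξ hξ
  have hda : v δ ξ - v δ (Matrix.vecMul ξ M) ≤ (1 - δ) * C := by nlinarith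
  have hdb : v δ (Matrix.vecMul ξ M) - v δ ξ ≤ (1 - δ) * C := by nlinarith
  have hfin : (1 - δ) * C ≤ (1 - δ) * C / δ := by
    rw [le_div_iff₀ hδ0]
    nlinarith
  rw [abs_le]
  constructor <;> linarith
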